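/- For each random context grammar G there is an equivalent random context grammar G' (generating the same language) in which every production (A→x, Per, For) satisfies A∉For. -/

import Mathlib

/-- Symbols: nonterminals `N` plus terminals `T`. -/
abbrev Symb (N T : Type) := N ⊕ T

/-- `alph w` is the set of symbols occurring in the string `w`. -/
def alph {α : Type} (w : List α) : Set α := {a | a ∈ w}

/-- A (nonerasing) random context grammar: finitely many productions
`(A → x, Per, For)` with `A ∈ N`, `x ∈ (N ∪ T)⁺`, `Per, For ⊆ N`. -/
structure RCG (N T : Type) where
  rules : Set (N × List (Symb N T) × Set N × Set N)
  fin : rules.Finite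
  ne : ∀ r ∈ rules, r.2.1 ≠ []
  start : N

/-- One derivation step of a random context grammar.  The flag `incl` tells whether
the rewritten symbol is included in the context check (`true`: conditions checked
against `alph (uAv)`; `false`: against `alph (uv)`). -/
def RCG.Step {N T : Type} (G : RCG N T) (incl : Bool)
    (s₁ s₂ : List (Symb N T)) : Prop :=
  ∃ A x Per For u v, (A, x, Per, For) ∈ G.rules ∧
    s₁ = u ++ Sum.inl A :: v ∧ s₂ = u ++ x ++ v ∧
    (∀ B ∈ Per, Sum.inl B ∈ alph (if incl then s₁ else u ++ v)) ∧
    (∀ B ∈ For, Sum.inl B ∉ alph (if incl then s₁ else u ++ v))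

/-- The language of a random context grammar (under the chosen derivation definition). -/
def RCG.Lang {N T : Type} (G : RCG N T) (incl : Bool) : Set (List T) :=
  {w | Relation.ReflTransGen (G.Step incl) [Sum.inl G.start] (w.map Sum.inr)}

/-- The family of random context languages over terminal alphabet `T`
(standard definition: rewritten symbol excluded from the context check). -/
def RC (T : Type) : Set (Set (List T)) :=
  {L | ∃ (N : Type) (G : RCG N T), G.Lang false = L}

/-- A (nonerasing) semi-conditional grammar of degree (1,1): productions
`(A → x, Per, For)` with `Per, For ⊆ N ∪ T` of cardinality at most one. -/
structure SCG (N T : Type) where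
  rules : Set (N × List (Symb N T) × Set (Symb N T) × Set (Symb N T))
  fin : rules.Finite
  ne : ∀ r ∈ rules, r.2.1 ≠ []
  per1 : ∀ r ∈ rules, r.2.2.1.Subsingleton
  for1 : ∀ r ∈ rules, r.2.2.2.Subsingleton
  start : N

/-- One derivation step of a semi-conditional grammar; `incl` as in `RCG.Step`. -/
def SCG.Step {N T : Type} (G : SCG N T) (incl : Bool)
    (s₁ s₂ : List (Symb N T)) : Prop :=
  ∃ A x Per For u v, (A, x, Per, For) ∈ G.rules ∧
    s₁ = u ++ Sum.inl A :: v ∧ s₂ = u ++ x ++ v ∧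
    Per ⊆ alph (if incl then s₁ else u ++ v) ∧
    (∀ a ∈ For, a ∉ alph (if incl then s₁ else u ++ v))

/-- The language of a semi-conditional grammar. -/
def SCG.Lang {N T : Type} (G : SCG N T) (incl : Bool) : Set (List T) :=
  {w | Relation.ReflTransGen (G.Step incl) [Sum.inl G.start] (w.map Sum.inr)}

/-- The family SC(1,1): inclusive derivation definition (context `alph (uAv)`). -/
def SC11 (T : Type) : Set (Set (List T)) :=
  {L | ∃ (N : Type) (G : SCG N T), G.Lang true = L}

/-- The family SC'(1,1): exclusive derivation definition (context `alph (uv)`). -/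
def SC11' (T : Type) : Set (Set (List T)) :=
  {L | ∃ (N : Type) (G : SCG N T), G.Lang false = L}

namespace RCNF
variable {N T : Type}

def e1 : Symb N T → Symb (N ⊕ N) T := Sum.map Sum.inl id

lemma e1_inj : Function.Injective (e1 (N := N) (T := T)) := by
  rintro (a|a) (b|b) h <;> simp [e1] at h <;> simp [h]

lemma e1_ne_primed (a : Symb N T) (B : N) : e1 a ≠ Sum.inl (Sum.inr B) := by
  cases a <;> simp [e1]

lemma not_primed_mem (s : List (Symb N T)) (A : N) :
    Sum.inl (Sum.inr A) ∉ s.map e1 := by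
  intro h
  obtain ⟨a, _, ha⟩ := List.mem_map.1 h
  exact e1_ne_primed a A ha

lemma mem_inlinl (l : List (Symb N T)) (B : N) :
    (Sum.inl (Sum.inl B) : Symb (N ⊕ N) T) ∈ l.map e1 ↔ Sum.inl B ∈ l := by
  have : (Sum.inl (Sum.inl B) : Symb (N ⊕ N) T) = e1 (Sum.inl B) := rfl
  rw [this, List.mem_map_of_injective e1_inj]

def primeRule (r : N × List (Symb N T) × Set N × Set N) :
    (N ⊕ N) × List (Symb (N ⊕ N) T) × Set (N ⊕ N) × Set (N ⊕ N) :=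
  (Sum.inl r.1, [Sum.inl (Sum.inr r.1)], ∅, {B | B.isRight})

def unprimeRule (r : N × List (Symb N T) × Set N × Set N) :
    (N ⊕ N) × List (Symb (N ⊕ N) T) × Set (N ⊕ N) × Set (N ⊕ N) :=
  (Sum.inr r.1, r.2.1.map e1, Sum.inl '' r.2.2.1, Sum.inl '' r.2.2.2)

def Gpr (G : RCG N T) : RCG (N ⊕ N) T where
  rules := primeRule '' G.rules ∪ unprimeRule '' G.rules
  fin := (G.fin.image _).union (G.fin.image _)
  ne := by
    rintro r (⟨s, hs, rfl⟩ | ⟨s, hs, rfl⟩)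
    · simp [primeRule]
    · simpa [unprimeRule] using G.ne s hs
  start := Sum.inl G.start

lemma step_fwd (G : RCG N T) {s₁ s₂} (h : G.Step false s₁ s₂) :
    Relation.ReflTransGen ((Gpr G).Step false) (s₁.map e1) (s₂.map e1) := by
  obtain ⟨A, x, Per, For, u, v, hr, rfl, rfl, hP, hF⟩ := h
  simp only [Bool.false_eq_true, if_false] at hP hF
  have mid : Relation.ReflTransGen ((Gpr G).Step false)
      ((u ++ Sum.inl A :: v).map e1)
      (u.map e1 ++ Sum.inl (Sum.inr A) :: v.map e1) := by
    refine Relation.ReflTransGen.single ?_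
    refine ⟨Sum.inl A, [Sum.inl (Sum.inr A)], ∅, {B | B.isRight},
      u.map e1, v.map e1, Or.inl ⟨(A, x, Per, For), hr, rfl⟩, by simp [e1], by simp, ?_, ?_⟩
    · simp
    · intro B hB hmem
      simp only [Bool.false_eq_true, if_false, alph, Set.mem_setOf_eq,
        List.mem_append] at hmem
      obtain ⟨C, rfl⟩ := Sum.isRight_iff.1 hB
      rcases hmem with hm | hm <;> exact not_primed_mem _ C hm
  refine mid.trans (Relation.ReflTransGen.single ?_)
  refine ⟨Sum.inr A, x.map e1, Sum.inl '' Per, Sum.inl '' For,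
    u.map e1, v.map e1, Or.inr ⟨(A, x, Per, For), hr, rfl⟩, rfl, by simp, ?_, ?_⟩
  · rintro _ ⟨B, hB, rfl⟩
    have := hP B hB
    simp only [Bool.false_eq_true, if_false, alph, Set.mem_setOf_eq,
      List.mem_append] at this ⊢
    rcases this with h | h
    · exact Or.inl ((mem_inlinl u B).2 h)
    · exact Or.inr ((mem_inlinl v B).2 h)
  · rintro _ ⟨B, hB, rfl⟩ hmem
    have := hF B hB
    simp only [Bool.false_eq_true, if_false, alph, Set.mem_setOf_eq,
      List.mem_append] at this hmem
    apply this
    rcases hmem with h | h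
    · exact Or.inl ((mem_inlinl u B).1 h)
    · exact Or.inr ((mem_inlinl v B).1 h)

def Reach (G : RCG N T) (s : List (Symb N T)) : Prop :=
  Relation.ReflTransGen (G.Step false) [Sum.inl G.start] s

def Inv (G : RCG N T) (t : List (Symb (N ⊕ N) T)) : Prop :=
  (∃ s, Reach G s ∧ t = s.map e1) ∨
  (∃ u A v, Reach G (u ++ Sum.inl A :: v) ∧
    t = u.map e1 ++ Sum.inl (Sum.inr A) :: v.map e1)

lemma split_unique {α : Type} {a b : α} :
    ∀ (l₁ l₃ : List α) {l₂ l₄ : List α}, l₁ ++ a :: l₂ = l₃ ++ b :: l₄ →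
      a ∉ l₃ → a ∉ l₄ → l₁ = l₃ ∧ a = b ∧ l₂ = l₄
  | [], [], _, _, h, _, _ => by simpa using h
  | [], c :: l₃, _, _, h, h3, _ => by
      simp only [List.nil_append, List.cons_append, List.cons.injEq] at h
      exact absurd (by rw [h.1]; exact List.mem_cons_self (a := c)) h3
  | c :: l₁, [], _, _, h, _, h4 => by
      simp only [List.nil_append, List.cons_append, List.cons.injEq] at h
      exact absurd (by rw [← h.2]; simp) h4
  | c :: l₁, d :: l₃, l₂, l₄, h, h3, h4 => by
      simp only [List.cons_append, List.cons.injEq] at h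
      obtain ⟨rfl, h⟩ := h
      have := split_unique l₁ l₃ h (fun hm => h3 (List.mem_cons_of_mem _ hm)) h4
      exact ⟨by rw [this.1], this.2.1, this.2.2⟩

lemma inv_step (G : RCG N T) {t t'} (ht : Inv G t)
    (h : (Gpr G).Step false t t') : Inv G t' := by
  obtain ⟨B, x', P', F', u', v', hr, h1, h2, hP, hF⟩ := h
  simp only [Bool.false_eq_true, if_false] at hP hF
  rcases hr with ⟨r, hrmem, heq⟩ | ⟨r, hrmem, heq⟩
  · -- prime rule
    obtain ⟨A, x, Per, For⟩ := r
    simp only [primeRule, Prod.mk.injEq] at heq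
    obtain ⟨hB, hx, hPe, hFe⟩ := heq
    subst hB hx hPe hFe
    rcases ht with ⟨s, hs, rfl⟩ | ⟨u, A₀, v, hs, heqt⟩
    · rw [List.map_eq_append_iff] at h1
      obtain ⟨u₀, v₀', rfl, rfl, hv⟩ := h1
      rw [List.map_eq_cons_iff] at hv
      obtain ⟨c, v₀, rfl, hc, rfl⟩ := hv
      have hcA : c = Sum.inl A := e1_inj (show e1 c = e1 (Sum.inl A) from hc)
      subst hcA
      right
      exact ⟨u₀, A, v₀, hs, by simp [h2]⟩
    · exfalso
      rw [h1] at heqt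
      have ht' : Sum.inl (Sum.inr A₀) ∈ u' ++ Sum.inl (Sum.inl A) :: v' := by
        rw [heqt]; simp
      rcases List.mem_append.1 ht' with hm | hm
      · exact hF (Sum.inr A₀) (by simp)
          (show _ ∈ alph (u' ++ v') from List.mem_append.2 (Or.inl hm))
      · rcases List.mem_cons.1 hm with hm | hm
        · simp at hm
        · exact hF (Sum.inr A₀) (by simp)
            (show _ ∈ alph (u' ++ v') from List.mem_append.2 (Or.inr hm))
  · -- unprime rule
    obtain ⟨A, x, Per, For⟩ := r
    simp only [unprimeRule, Prod.mk.injEq] at heq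
    obtain ⟨hB, hx, hPe, hFe⟩ := heq
    subst hB hx hPe hFe
    rcases ht with ⟨s, hs, rfl⟩ | ⟨u, A₀, v, hs, heqt⟩
    · exfalso
      exact not_primed_mem s A (by rw [h1]; simp)
    · rw [h1] at heqt
      have hA : A₀ = A := by
        have hb : Sum.inl (Sum.inr A) ∈ u.map e1 ++ Sum.inl (Sum.inr A₀) :: v.map e1 := by
          rw [← heqt]; simp
        rcases List.mem_append.1 hb with hm | hm
        · exact absurd hm (not_primed_mem u A)
        · rcases List.mem_cons.1 hm with hm | hm
          · simpa using hm.symm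
          · exact absurd hm (not_primed_mem v A)
      subst hA
      obtain ⟨hu, _, hv⟩ := split_unique u' (u.map e1) heqt
        (not_primed_mem u A₀) (not_primed_mem v A₀)
      rw [hu, hv] at h2 hP hF
      left
      refine ⟨u ++ x ++ v, Relation.ReflTransGen.tail hs ?_, by simp [h2]⟩
      refine ⟨A₀, x, Per, For, u, v, hrmem, rfl, rfl, ?_, ?_⟩
      · intro C hC
        have := hP (Sum.inl C) ⟨C, hC, rfl⟩
        simp only [Bool.false_eq_true, if_false, alph, Set.mem_setOf_eq,
          List.mem_append] at this ⊢
        rcases this with h | h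
        · exact Or.inl ((mem_inlinl u C).1 h)
        · exact Or.inr ((mem_inlinl v C).1 h)
      · intro C hC hmem
        apply hF (Sum.inl C) ⟨C, hC, rfl⟩
        simp only [Bool.false_eq_true, if_false, alph, Set.mem_setOf_eq,
          List.mem_append] at hmem ⊢
        rcases hmem with hm | hm
        · exact Or.inl ((mem_inlinl u C).2 hm)
        · exact Or.inr ((mem_inlinl v C).2 hm)

end RCNF

/-- every random context grammar has an equivalent one in which
no production's left-hand side occurs in its own forbidding set. -/


theorem rc_no_self_forbidding (N T : Type) (G : RCG N T) :
    ∃ (N' : Type) (G' : RCG N' T),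
      G'.Lang false = G.Lang false ∧
      ∀ r ∈ G'.rules, r.1 ∉ r.2.2.2 := by
  refine ⟨N ⊕ N, RCNF.Gpr G, ?_, ?_⟩
  · ext w
    have hterm : ((w.map Sum.inr : List (Symb N T)).map RCNF.e1)
        = (w.map Sum.inr : List (Symb (N ⊕ N) T)) := by
      simp [RCNF.e1, List.map_map, Function.comp]
    constructor
    · intro hw
      have hgen : ∀ t, Relation.ReflTransGen ((RCNF.Gpr G).Step false)
          [Sum.inl (RCNF.Gpr G).start] t → RCNF.Inv G t := by
        intro t h
        induction h with
        | refl => exact Or.inl ⟨[Sum.inl G.start], Relation.ReflTransGen.refl,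
            by simp [RCNF.e1, RCNF.Gpr]⟩
        | tail _ hstep ih => exact RCNF.inv_step G ih hstep
      have hinv : RCNF.Inv G (w.map Sum.inr) := hgen _ hw
      rcases hinv with ⟨s, hs, hse⟩ | ⟨u, A, v, _, heq⟩
      · have : s = w.map Sum.inr := by
          apply List.map_injective_iff.2 RCNF.e1_inj
          rw [← hse, hterm]
        rwa [this] at hs
      · exfalso
        have : Sum.inl (Sum.inr A) ∈ (w.map Sum.inr : List (Symb (N ⊕ N) T)) := by
          rw [heq]; simp
        obtain ⟨a, _, ha⟩ := List.mem_map.1 this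
        simp at ha
    · intro hw
      have key : ∀ s, RCNF.Reach G s →
          Relation.ReflTransGen ((RCNF.Gpr G).Step false)
            [Sum.inl (RCNF.Gpr G).start] (s.map RCNF.e1) := by
        intro s h
        induction h with
        | refl => exact Relation.ReflTransGen.refl
        | tail _ hstep ih => exact ih.trans (RCNF.step_fwd G hstep)
      have := key _ hw
      rwa [hterm] at this
  · rintro r (⟨s, hs, rfl⟩ | ⟨s, hs, rfl⟩)
    · simp [RCNF.primeRule]
    · simp [RCNF.unprimeRule]
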